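/- arXiv:2206.07786 — 3 statements merged into one kernel-verified Lean document; each statement's English description precedes it below -/
import Mathlib

section
/- Let d, K ≥ 1, let Θ ∈ ℝ^{d×K}, and let S = (ΘᵀΘ)^{1/2} denote the positive semidefinite square root of ΘᵀΘ. Then for every symmetric positive definite matrix Ω ∈ ℝ^{K×K}: Tr(Θ Ω⁻¹ Θᵀ) · Tr(Ω) ≥ (Tr(S))². In particular, for every symmetric positive definite Ω with Tr(Ω) = 1, we have Tr(Θ Ω⁻¹ Θᵀ) ≥ (Tr((ΘᵀΘ)^{1/2}))². -/
open Matrix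

/-- Frobenius pairing as a trace. -/
lemma trace_transpose_mul_eq_sum {K : ℕ} (A B : Matrix (Fin K) (Fin K) ℝ) :
    (Aᵀ * B).trace = ∑ p : Fin K × Fin K, A p.1 p.2 * B p.1 p.2 := by
  rw [Fintype.sum_prod_type]
  simp only [Matrix.trace, Matrix.diag, Matrix.mul_apply, Matrix.transpose_apply]
  rw [Finset.sum_comm]

/-- For `S` the positive semidefinite square root of `ΘᵀΘ`, and every symmetric positive
definite `Ω`: `Tr(Θ Ω⁻¹ Θᵀ) · Tr(Ω) ≥ (Tr S)²`; in particular if `Tr(Ω) = 1` then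
`Tr(Θ Ω⁻¹ Θᵀ) ≥ (Tr((ΘᵀΘ)^{1/2}))²`. -/
theorem trace_quadratic_lower_bound {d K : ℕ} (hd : 1 ≤ d) (hK : 1 ≤ K)
    (Θ : Matrix (Fin d) (Fin K) ℝ) (S : Matrix (Fin K) (Fin K) ℝ)
    (hS : S.PosSemidef) (hSsq : S * S = Θᵀ * Θ) :
    ∀ Ω : Matrix (Fin K) (Fin K) ℝ, Ω.PosDef →
      ((Θ * Ω⁻¹ * Θᵀ).trace * Ω.trace ≥ S.trace ^ 2 ∧
        (Ω.trace = 1 → (Θ * Ω⁻¹ * Θᵀ).trace ≥ S.trace ^ 2)) := by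
  intro Ω hΩ
  -- R is the psd square root of Ω, T its inverse
  set R : Matrix (Fin K) (Fin K) ℝ := (open scoped MatrixOrder in CFC.sqrt Ω) with hRdef
  have hR : R.PosSemidef := (open scoped MatrixOrder in (CFC.sqrt_nonneg Ω).posSemidef)
  have hRR : R * R = Ω := (open scoped MatrixOrder in CFC.sqrt_mul_sqrt_self Ω hΩ.posSemidef.nonneg)
  have hRsymm : Rᵀ = R := hR.isHermitian
  set T : Matrix (Fin K) (Fin K) ℝ := R⁻¹ with hTdef
  have hT : T.PosSemidef := hR.inv
  have hTsymm : Tᵀ = T := hT.isHermitian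
  have hSsymm : Sᵀ = S := hS.isHermitian
  -- R is invertible
  have hdetR : IsUnit R.det := by
    have h1 : R.det * R.det = Ω.det := by rw [← Matrix.det_mul, hRR]
    have h2 : (0:ℝ) < Ω.det := hΩ.det_pos
    have : R.det ≠ 0 := by
      intro h
      rw [h, mul_zero] at h1
      exact h2.ne' h1.symm
    exact this.isUnit
  have hRT : R * T = 1 := Matrix.mul_nonsing_inv R hdetR
  have hTR : T * R = 1 := Matrix.nonsing_inv_mul R hdetR
  have hTT : T * T = Ω⁻¹ := by
    rw [hTdef, ← Matrix.mul_inv_rev, hRR]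
  -- Cauchy-Schwarz with A = S*T, B = R
  have key := Finset.sum_mul_sq_le_sq_mul_sq Finset.univ
    (fun p : Fin K × Fin K => (S * T) p.1 p.2) (fun p : Fin K × Fin K => R p.1 p.2)
  have hAB : (∑ p : Fin K × Fin K, (S * T) p.1 p.2 * R p.1 p.2) = S.trace := by
    rw [← trace_transpose_mul_eq_sum]
    have : (S * T)ᵀ = T * S := by
      rw [Matrix.transpose_mul, hSsymm, hTsymm]
    rw [this, Matrix.mul_assoc, Matrix.trace_mul_comm, Matrix.mul_assoc, hRT, Matrix.mul_one]
  have hAA : (∑ p : Fin K × Fin K, (S * T) p.1 p.2 ^ 2) = (Θ * Ω⁻¹ * Θᵀ).trace := by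
    have h1 : (∑ p : Fin K × Fin K, (S * T) p.1 p.2 * (S * T) p.1 p.2)
        = ((S * T)ᵀ * (S * T)).trace := (trace_transpose_mul_eq_sum _ _).symm
    simp only [pow_two]
    rw [h1, Matrix.transpose_mul, hSsymm, hTsymm]
    calc (T * S * (S * T)).trace
        = ((S * T) * (T * S)).trace := Matrix.trace_mul_comm _ _
      _ = (S * (T * T) * S).trace := by rw [Matrix.mul_assoc, Matrix.mul_assoc,
            ← Matrix.mul_assoc T T S, ← Matrix.mul_assoc]
      _ = ((S * S) * Ω⁻¹).trace := by rw [hTT, Matrix.trace_mul_cycle]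
      _ = (Θᵀ * (Θ * Ω⁻¹)).trace := by rw [hSsq, Matrix.mul_assoc]
      _ = ((Θ * Ω⁻¹) * Θᵀ).trace := Matrix.trace_mul_comm _ _
  have hBB : (∑ p : Fin K × Fin K, R p.1 p.2 ^ 2) = Ω.trace := by
    have h1 : (∑ p : Fin K × Fin K, R p.1 p.2 * R p.1 p.2)
        = (Rᵀ * R).trace := (trace_transpose_mul_eq_sum _ _).symm
    simp only [pow_two]
    rw [h1, hRsymm, hRR]
  rw [hAB, hAA, hBB] at key
  exact ⟨key, fun h => by rw [← mul_one ((Θ * Ω⁻¹ * Θᵀ).trace), ← h]; exact key⟩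
end

section
/- Let d, K ≥ 1 and let Θ ∈ ℝ^{d×K} be such that ΘᵀΘ is positive definite. Let S = (ΘᵀΘ)^{1/2} be the positive definite square root of ΘᵀΘ and define Ω* = S / Tr(S). Then: (i) Ω* is symmetric positive definite with Tr(Ω*) = 1; (ii) Tr(Θ (Ω*)⁻¹ Θᵀ) = (Tr(S))²; and therefore (iii) Ω* minimizes Ω ↦ Tr(Θ Ω⁻¹ Θᵀ) over the set of symmetric positive definite K×K matrices Ω with Tr(Ω) = 1, i.e., Tr(Θ Ω⁻¹ Θᵀ) ≥ Tr(Θ (Ω*)⁻¹ Θᵀ) for every symmetric positive definite Ω with Tr(Ω) = 1. -/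
open Matrix

lemma trace_CS {n : Type*} [Fintype n] (A B : Matrix n n ℝ) :
    (A * B).trace ^ 2 ≤ (A * Aᵀ).trace * (B * Bᵀ).trace := by
  have h1 : (A * B).trace = ∑ p : n × n, A p.1 p.2 * B p.2 p.1 := by
    rw [Fintype.sum_prod_type, Matrix.trace]
    simp [Matrix.mul_apply, Matrix.diag]
  have h2 : (A * Aᵀ).trace = ∑ p : n × n, (A p.1 p.2) ^ 2 := by
    rw [Fintype.sum_prod_type, Matrix.trace]
    simp [Matrix.mul_apply, Matrix.diag, sq]
  have h3 : (B * Bᵀ).trace = ∑ p : n × n, (B p.2 p.1) ^ 2 := by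
    rw [Fintype.sum_prod_type_right, Matrix.trace]
    simp [Matrix.mul_apply, Matrix.diag, sq]
  rw [h1, h2, h3]
  exact Finset.sum_mul_sq_le_sq_mul_sq Finset.univ _ _

lemma posdef_of_sq {n : Type*} [Fintype n] [DecidableEq n]
    {S P : Matrix n n ℝ} (hS : S.PosSemidef) (hP : P.PosDef) (hsq : S * S = P) :
    S.PosDef := by
  refine PosDef.of_dotProduct_mulVec_pos hS.1 fun x hx => lt_of_le_of_ne (hS.dotProduct_mulVec_nonneg x) fun heq => ?_
  have h0 : S *ᵥ x = 0 := (hS.dotProduct_mulVec_zero_iff x).mp heq.symm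
  have : P *ᵥ x = 0 := by rw [← hsq, ← mulVec_mulVec, h0, mulVec_zero]
  have h2 := hP.dotProduct_mulVec_pos hx
  rw [this, dotProduct_zero] at h2
  exact lt_irrefl 0 h2

lemma posdef_trace_pos {n : Type*} [Fintype n] [DecidableEq n] [Nonempty n]
    {S : Matrix n n ℝ} (hS : S.PosDef) : 0 < S.trace := by
  have h : ∀ i, 0 < S i i := fun i => by
    have := hS.dotProduct_mulVec_pos (x := Pi.single i 1) (by simp [Pi.single_eq_same, Function.ne_iff])
    simpa [dotProduct, mulVec, Pi.single_apply, Finset.sum_ite_eq'] using this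
  exact Finset.sum_pos (fun i _ => h i) Finset.univ_nonempty


/-- If `ΘᵀΘ` is positive definite with positive definite square root `S`, then
`Ω* = S / Tr(S)` is symmetric positive definite with unit trace, satisfies
`Tr(Θ (Ω*)⁻¹ Θᵀ) = (Tr S)²`, and minimizes `Ω ↦ Tr(Θ Ω⁻¹ Θᵀ)` over symmetric positive
definite matrices of unit trace. -/
theorem optimal_covariance_update {d K : ℕ} (hd : 1 ≤ d) (hK : 1 ≤ K)
    (Θ : Matrix (Fin d) (Fin K) ℝ) (hΘ : (Θᵀ * Θ).PosDef)
    (S : Matrix (Fin K) (Fin K) ℝ) (hS : S.PosSemidef) (hSsq : S * S = Θᵀ * Θ) :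
    ((S.trace)⁻¹ • S).IsSymm ∧ ((S.trace)⁻¹ • S).PosDef ∧ ((S.trace)⁻¹ • S).trace = 1 ∧
    (Θ * ((S.trace)⁻¹ • S)⁻¹ * Θᵀ).trace = S.trace ^ 2 ∧
    ∀ Ω : Matrix (Fin K) (Fin K) ℝ, Ω.PosDef → Ω.trace = 1 →
      (Θ * Ω⁻¹ * Θᵀ).trace ≥ (Θ * ((S.trace)⁻¹ • S)⁻¹ * Θᵀ).trace := by
  haveI : Nonempty (Fin K) := ⟨⟨0, hK⟩⟩
  have hSpd : S.PosDef := posdef_of_sq hS hΘ hSsq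
  have htr : 0 < S.trace := posdef_trace_pos hSpd
  have htr0 : S.trace ≠ 0 := ne_of_gt htr
  have hSsymm : Sᵀ = S := by
    rw [← conjTranspose_eq_transpose_of_trivial, hS.1.eq]
  have hdet : IsUnit S.det := isUnit_iff_ne_zero.mpr hSpd.det_pos.ne'
  haveI : Invertible (S.trace)⁻¹ := invertibleOfNonzero (inv_ne_zero htr0)
  have hinv : ((S.trace)⁻¹ • S)⁻¹ = S.trace • S⁻¹ := by
    rw [Matrix.inv_smul S (S.trace)⁻¹ hdet]
    congr 1
    exact invOf_eq_right_inv (by rw [inv_mul_cancel₀ htr0])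
  have hval : (Θ * ((S.trace)⁻¹ • S)⁻¹ * Θᵀ).trace = S.trace ^ 2 := by
    rw [hinv, Matrix.mul_smul, Matrix.smul_mul, trace_smul, smul_eq_mul,
      trace_mul_cycle, ← hSsq, Matrix.mul_assoc, Matrix.mul_nonsing_inv _ hdet,
      Matrix.mul_one, sq]
  refine ⟨?_, ?_, ?_, hval, ?_⟩
  · unfold Matrix.IsSymm
    rw [transpose_smul, hSsymm]
  · refine PosDef.of_dotProduct_mulVec_pos ?_ fun x hx => ?_
    · show ((S.trace)⁻¹ • S)ᴴ = _
      rw [conjTranspose_smul, hS.1.eq, star_trivial]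
    · have := hSpd.dotProduct_mulVec_pos hx
      rw [smul_mulVec, dotProduct_smul, smul_eq_mul]
      positivity
  · rw [trace_smul, smul_eq_mul, inv_mul_cancel₀ htr0]
  · intro Ω hΩ hΩtr
    rw [hval]
    open scoped MatrixOrder in
    set R := CFC.sqrt Ω with hR
    open scoped MatrixOrder in
    have hRsq : R * R = Ω := CFC.sqrt_mul_sqrt_self Ω hΩ.posSemidef.nonneg
    have hRpd : R.PosDef := posdef_of_sq (by open scoped MatrixOrder in exact (CFC.sqrt_nonneg Ω).posSemidef) hΩ hRsq
    have hRdet : IsUnit R.det := isUnit_iff_ne_zero.mpr hRpd.det_pos.ne'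
    have hRsymm : Rᵀ = R := by
      rw [← conjTranspose_eq_transpose_of_trivial, hRpd.1.eq]
    have key : (Θ * Ω⁻¹ * Θᵀ).trace = ((R⁻¹ * S) * (R⁻¹ * S)ᵀ).trace := by
      calc (Θ * Ω⁻¹ * Θᵀ).trace
          = (Θᵀ * Θ * Ω⁻¹).trace := by rw [trace_mul_cycle]
        _ = (Ω⁻¹ * (S * S)).trace := by rw [← hSsq, trace_mul_comm]
        _ = (R⁻¹ * (R⁻¹ * (S * S))).trace := by
            rw [← hRsq, Matrix.mul_inv_rev, Matrix.mul_assoc]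
        _ = ((R⁻¹ * (S * S)) * R⁻¹).trace := trace_mul_comm _ _
        _ = ((R⁻¹ * S) * (R⁻¹ * S)ᵀ).trace := by
            rw [transpose_mul, Matrix.transpose_nonsing_inv, hRsymm, hSsymm]
            simp only [Matrix.mul_assoc]
    have hTrRR : (R * Rᵀ).trace = 1 := by rw [hRsymm, hRsq, hΩtr]
    have hTrRB : (R * (R⁻¹ * S)).trace = S.trace := by
      rw [← Matrix.mul_assoc, Matrix.mul_nonsing_inv _ hRdet, Matrix.one_mul]
    have hcs := trace_CS R (R⁻¹ * S)
    rw [hTrRB, hTrRR, one_mul] at hcs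
    rw [key]
    exact hcs
end

section
/- Let d, N ≥ 1, let X ∈ ℝ^{d×N}, μ ∈ ℝ^d, let T ∈ ℝ^{d×d} be symmetric positive definite, and let σ > 0. Then for every y ∈ ℝ^N, the marginal likelihood integral of the Gaussian linear model with Gaussian prior satisfies ∫_{ℝ^d} N(y; Xᵀθ, σ² I_N) · N(θ; μ, T) dθ = N(y; Xᵀμ, Xᵀ T X + σ² I_N), where Xᵀ T X + σ² I_N is symmetric positive definite. -/
open Matrix MeasureTheory

/-- The multivariate Gaussian density `N(x; μ, S)` with mean `μ` and covariance `S`. -/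
noncomputable def gaussianDensity {ι : Type*} [Fintype ι] [DecidableEq ι]
    (μ : ι → ℝ) (S : Matrix ι ι ℝ) (x : ι → ℝ) : ℝ :=
  (2 * Real.pi) ^ (-(Fintype.card ι : ℝ) / 2) * S.det ^ (-(1 : ℝ) / 2) *
    Real.exp (-(1 / 2) * ((x - μ) ⬝ᵥ (S⁻¹ *ᵥ (x - μ))))




lemma integral_rexp_neg_half_sum_sq {n : ℕ} (c : Fin n → ℝ) :
    ∫ v : Fin n → ℝ, Real.exp (-(1/2) * ∑ i, v i ^ 2 + ∑ i, c i * v i)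
      = (2 * Real.pi) ^ ((n : ℝ) / 2) * Real.exp ((1/2) * ∑ i, c i ^ 2) := by
  have key := GaussianFourier.integral_cexp_neg_sum_mul_add
    (b := fun _ : Fin n => (1/2 : ℂ)) (fun _ => by norm_num) (fun i => (c i : ℂ))
  have hofreal : ∀ v : Fin n → ℝ,
      Complex.exp (- ∑ i, (1/2 : ℂ) * (v i : ℂ) ^ 2 + ∑ i, (c i : ℂ) * (v i : ℂ))
        = ((Real.exp (-(1/2) * ∑ i, v i ^ 2 + ∑ i, c i * v i) : ℝ) : ℂ) := by
    intro v
    rw [Complex.ofReal_exp]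
    congr 1
    push_cast
    rw [← Finset.mul_sum]
    ring
  rw [show (fun v : Fin n → ℝ => Complex.exp (- ∑ i, (1/2 : ℂ) * (v i : ℂ) ^ 2 + ∑ i, (c i : ℂ) * (v i : ℂ))) = fun v => ((Real.exp (-(1/2) * ∑ i, v i ^ 2 + ∑ i, c i * v i) : ℝ) : ℂ) from funext hofreal,
    show ((fun v : Fin n → ℝ => ((Real.exp (-(1/2) * ∑ i, v i ^ 2 + ∑ i, c i * v i) : ℝ) : ℂ))) = (fun v : Fin n → ℝ => (RCLike.ofReal (K := ℂ) (Real.exp (-(1/2) * ∑ i, v i ^ 2 + ∑ i, c i * v i)))) from rfl,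
    integral_ofReal (𝕜 := ℂ)] at key
  have hrhs : (∏ i : Fin n, ((Real.pi : ℂ) / (1/2)) ^ (1/2 : ℂ) * Complex.exp ((c i : ℂ) ^ 2 / (4 * (1/2))))
      = (((2 * Real.pi) ^ ((n : ℝ) / 2) * Real.exp ((1/2) * ∑ i, c i ^ 2) : ℝ) : ℂ) := by
    rw [Finset.prod_mul_distrib, Finset.prod_const, ← Complex.exp_sum]
    have h2pi : ((Real.pi : ℂ) / (1/2)) = ((2 * Real.pi : ℝ) : ℂ) := by push_cast; ring
    have hpow : (((2 * Real.pi : ℝ) : ℂ)) ^ (1/2 : ℂ) = (((2 * Real.pi) ^ (1/2 : ℝ) : ℝ) : ℂ) := by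
      rw [show (1/2 : ℂ) = ((1/2 : ℝ) : ℂ) by norm_num, ← Complex.ofReal_cpow (by positivity)]
    have hsum : (∑ i : Fin n, (c i : ℂ) ^ 2 / (4 * (1/2))) = (((1/2) * ∑ i, c i ^ 2 : ℝ) : ℂ) := by
      push_cast
      rw [Finset.mul_sum]
      congr 1 with i
      ring
    rw [h2pi, hpow, hsum, ← Complex.ofReal_exp, ← Complex.ofReal_pow, ← Complex.ofReal_mul]
    norm_cast
    rw [Finset.card_univ, Fintype.card_fin, ← Real.rpow_natCast ((2*Real.pi) ^ (1/2:ℝ)) n,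
      ← Real.rpow_mul (by positivity)]
    ring_nf
  exact Complex.ofReal_inj.mp (key.trans hrhs)

open scoped MatrixOrder in
lemma integral_rexp_neg_half_quad {n : ℕ} {Q : Matrix (Fin n) (Fin n) ℝ} (hQ : Q.PosDef)
    (b : Fin n → ℝ) :
    ∫ z : Fin n → ℝ, Real.exp (-(1/2) * (z ⬝ᵥ (Q *ᵥ z)) + b ⬝ᵥ z)
      = (2 * Real.pi) ^ ((n : ℝ) / 2) * Q.det ^ (-(1:ℝ)/2) *
        Real.exp ((1/2) * (b ⬝ᵥ (Q⁻¹ *ᵥ b))) := by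
  classical
  set R := CFC.sqrt Q with hRdef
  have hRR : R * R = Q := CFC.sqrt_mul_sqrt_self Q hQ.posSemidef.nonneg
  have hRps : R.PosSemidef := (CFC.sqrt_nonneg Q).posSemidef
  have hRsymm : Rᵀ = R := hRps.isHermitian
  have hdetQ : 0 < Q.det := hQ.det_pos
  have hdetR : 0 < R.det := by
    have h1 : R.det * R.det = Q.det := by rw [← Matrix.det_mul, hRR]
    have h2 : 0 ≤ R.det := by
      rw [show R.det = ∏ i, hRps.isHermitian.eigenvalues i by
        exact_mod_cast hRps.isHermitian.det_eq_prod_eigenvalues]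
      exact Finset.prod_nonneg fun i _ => hRps.eigenvalues_nonneg i
    rcases h2.lt_or_eq with h | h
    · exact h
    · exfalso; rw [← h] at h1; simp at h1; rw [← h1] at hdetQ; simp at hdetQ
  have hdetRne : R.det ≠ 0 := ne_of_gt hdetR
  have hRinv_symm : (R⁻¹)ᵀ = R⁻¹ := by rw [Matrix.transpose_nonsing_inv, hRsymm]
  have hQinv : R⁻¹ * R⁻¹ = Q⁻¹ := by rw [← Matrix.mul_inv_rev, hRR]
  -- change of variables
  set f : (Fin n → ℝ) →ₗ[ℝ] (Fin n → ℝ) := Matrix.toLin' R⁻¹ with hfdef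
  have hdetf : LinearMap.det f = R.det⁻¹ := by
    rw [hfdef, LinearMap.det_toLin', Matrix.det_nonsing_inv, Ring.inverse_eq_inv]
  have hdetfne : LinearMap.det f ≠ 0 := by rw [hdetf]; exact inv_ne_zero hdetRne
  have hmap := Real.map_linearMap_volume_pi_eq_smul_volume_pi hdetfne
  set g : (Fin n → ℝ) → ℝ := fun z => Real.exp (-(1/2) * (z ⬝ᵥ (Q *ᵥ z)) + b ⬝ᵥ z) with hgdef
  have hgcont : Continuous g := by
    apply Real.continuous_exp.comp
    apply Continuous.add
    · apply continuous_const.mul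
      show Continuous fun z : Fin n → ℝ => ∑ i, z i * ∑ j, Q i j * z j
      exact continuous_finset_sum _ fun i _ => (continuous_apply i).mul
        (continuous_finset_sum _ fun j _ => continuous_const.mul (continuous_apply j))
    · show Continuous fun z : Fin n → ℝ => ∑ i, b i * z i
      exact continuous_finset_sum _ fun i _ => continuous_const.mul (continuous_apply i)
  have hint : ∫ y, g y ∂(Measure.map f volume) = ∫ x, g (f x) := by
    apply integral_map
    · exact f.continuous_of_finiteDimensional.measurable.aemeasurable
    · exact hgcont.aestronglyMeasurable
  rw [hmap, integral_smul_measure, ENNReal.toReal_ofReal (abs_nonneg _), hdetf] at hint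
  have habs : |(R.det⁻¹)⁻¹| = R.det := by rw [inv_inv, abs_of_pos hdetR]
  rw [habs] at hint
  -- compute g (f x)
  have hgf : ∀ v : Fin n → ℝ, g (f v) = Real.exp (-(1/2) * ∑ i, v i ^ 2 + ∑ i, (R⁻¹ *ᵥ b) i * v i) := by
    intro v
    have hfv : f v = R⁻¹ *ᵥ v := Matrix.toLin'_apply _ _
    rw [hgdef]
    simp only [hfv]
    congr 2
    · have h1 : Q *ᵥ (R⁻¹ *ᵥ v) = R *ᵥ v := by
        rw [Matrix.mulVec_mulVec, ← hRR, Matrix.mul_assoc, Matrix.mul_nonsing_inv _ (isUnit_iff_ne_zero.mpr hdetRne),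
          Matrix.mul_one]
      rw [h1, Matrix.dotProduct_mulVec, Matrix.vecMul_mulVec, hRinv_symm,
        Matrix.nonsing_inv_mul _ (isUnit_iff_ne_zero.mpr hdetRne)]
      simp [dotProduct, sq]
    · rw [Matrix.dotProduct_mulVec, ← Matrix.mulVec_transpose, hRinv_symm]
      simp [dotProduct]
  calc ∫ z, g z = R.det⁻¹ * (R.det * ∫ z, g z) := by field_simp
    _ = R.det⁻¹ * ∫ v, g (f v) := by rw [← hint]; simp [smul_eq_mul]
    _ = R.det⁻¹ * ((2 * Real.pi) ^ ((n : ℝ) / 2) * Real.exp ((1/2) * ∑ i, (R⁻¹ *ᵥ b) i ^ 2)) := by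
        rw [show (fun v => g (f v)) = fun v => Real.exp (-(1/2) * ∑ i, v i ^ 2 + ∑ i, (R⁻¹ *ᵥ b) i * v i) from funext hgf]
        rw [integral_rexp_neg_half_sum_sq]
    _ = (2 * Real.pi) ^ ((n : ℝ) / 2) * Q.det ^ (-(1:ℝ)/2) * Real.exp ((1/2) * (b ⬝ᵥ (Q⁻¹ *ᵥ b))) := by
        have hsum : ∑ i, (R⁻¹ *ᵥ b) i ^ 2 = b ⬝ᵥ (Q⁻¹ *ᵥ b) := by
          have : ∑ i, (R⁻¹ *ᵥ b) i ^ 2 = (R⁻¹ *ᵥ b) ⬝ᵥ (R⁻¹ *ᵥ b) := by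
            simp [dotProduct, sq]
          rw [this, Matrix.dotProduct_mulVec, Matrix.vecMul_mulVec, hRinv_symm, hQinv,
            ← Matrix.dotProduct_mulVec]
        have hdetpow : Q.det ^ (-(1:ℝ)/2) = R.det⁻¹ := by
          rw [← hRR, Matrix.det_mul, ← sq, ← Real.rpow_natCast R.det 2,
            ← Real.rpow_mul hdetR.le]
          norm_num
          exact Real.rpow_neg_one R.det
        rw [hsum, hdetpow]; ring

lemma posSemidef_smul' {n : ℕ} {A : Matrix (Fin n) (Fin n) ℝ} (hA : A.PosSemidef) {c : ℝ}
    (hc : 0 ≤ c) : (c • A).PosSemidef := by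
  constructor
  · have hAt : Aᵀ = A := by
      have := hA.1.eq
      rwa [Matrix.conjTranspose_eq_transpose_of_trivial] at this
    simp [Matrix.IsHermitian, Matrix.conjTranspose_smul,
      Matrix.conjTranspose_eq_transpose_of_trivial, hAt]
  · intro x
    simpa [Finsupp.mul_sum, mul_assoc, mul_left_comm] using mul_nonneg hc (hA.2 x)

lemma posDef_smul_one {n : ℕ} {c : ℝ} (hc : 0 < c) :
    (c • (1 : Matrix (Fin n) (Fin n) ℝ)).PosDef := by
  rw [Matrix.smul_one_eq_diagonal]
  exact Matrix.posDef_diagonal_iff.mpr fun _ => hc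

/-- Marginal likelihood of a Gaussian linear model with a Gaussian prior:
`∫ N(y; Xᵀθ, σ²I) N(θ; μ, T) dθ = N(y; Xᵀμ, Xᵀ T X + σ² I)`, and the marginal covariance
`Xᵀ T X + σ² I` is symmetric positive definite. -/
theorem gaussian_marginal_likelihood {d N : ℕ} (hd : 1 ≤ d) (hN : 1 ≤ N)
    (X : Matrix (Fin d) (Fin N) ℝ) (μ : Fin d → ℝ)
    (T : Matrix (Fin d) (Fin d) ℝ) (hT : T.PosDef) (hTsymm : T.IsSymm)
    (σ : ℝ) (hσ : 0 < σ) (y : Fin N → ℝ) :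
    (Xᵀ * T * X + σ ^ 2 • (1 : Matrix (Fin N) (Fin N) ℝ)).IsSymm ∧
    (Xᵀ * T * X + σ ^ 2 • (1 : Matrix (Fin N) (Fin N) ℝ)).PosDef ∧
    ∫ θ : Fin d → ℝ,
        gaussianDensity (Xᵀ *ᵥ θ) (σ ^ 2 • (1 : Matrix (Fin N) (Fin N) ℝ)) y *
          gaussianDensity μ T θ =
      gaussianDensity (Xᵀ *ᵥ μ) (Xᵀ * T * X + σ ^ 2 • (1 : Matrix (Fin N) (Fin N) ℝ)) y := by

  classical
  have hs : (0:ℝ) < σ ^ 2 := by positivity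
  set s : ℝ := (σ ^ 2)⁻¹ with hsdef
  have hs' : (0:ℝ) < s := by positivity
  set S : Matrix (Fin N) (Fin N) ℝ := Xᵀ * T * X + σ ^ 2 • 1 with hSdef
  set Q : Matrix (Fin d) (Fin d) ℝ := T⁻¹ + s • (X * Xᵀ) with hQdef
  -- positivity facts
  have hXXt : (X * Xᵀ).PosSemidef := by
    have := Matrix.posSemidef_self_mul_conjTranspose X
    rwa [Matrix.conjTranspose_eq_transpose_of_trivial] at this
  have hXtTX : (Xᵀ * T * X).PosSemidef := by
    have := hT.posSemidef.conjTranspose_mul_mul_same (B := X)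
    rwa [Matrix.conjTranspose_eq_transpose_of_trivial] at this
  have hSpd : S.PosDef := Matrix.PosDef.posSemidef_add hXtTX (posDef_smul_one hs)
  have hQpd : Q.PosDef := hT.inv.add_posSemidef (posSemidef_smul' hXXt hs'.le)
  have hSsymm : S.IsSymm := by
    have := hSpd.isHermitian
    rwa [Matrix.IsHermitian, Matrix.conjTranspose_eq_transpose_of_trivial] at this
  refine ⟨hSsymm, hSpd, ?_⟩
  have hdetT : (0:ℝ) < T.det := hT.det_pos
  have hdetQ : (0:ℝ) < Q.det := hQpd.det_pos
  have hTinv : T * T⁻¹ = 1 := Matrix.mul_nonsing_inv _ (isUnit_iff_ne_zero.mpr hdetT.ne')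
  have hQQinv : Q * Q⁻¹ = 1 := Matrix.mul_nonsing_inv _ (isUnit_iff_ne_zero.mpr hdetQ.ne')
  have hss : σ ^ 2 * s = 1 := by rw [hsdef]; exact mul_inv_cancel₀ hs.ne'
  have hsigmainv : (σ ^ 2 • (1 : Matrix (Fin N) (Fin N) ℝ))⁻¹ = s • 1 := by
    apply Matrix.inv_eq_right_inv
    rw [Matrix.smul_mul, Matrix.mul_smul, smul_smul, Matrix.one_mul, hss, one_smul]
  have hdetSigma : (σ ^ 2 • (1 : Matrix (Fin N) (Fin N) ℝ)).det = (σ^2)^N := by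
    rw [Matrix.det_smul, Matrix.det_one, mul_one, Fintype.card_fin]
  have hTQ : T * Q = 1 + s • (T * X * Xᵀ) := by
    rw [hQdef, Matrix.mul_add, hTinv, Matrix.mul_smul, Matrix.mul_assoc]
  have hdetS : S.det = (σ^2)^N * (T.det * Q.det) := by
    have h1 : S = σ^2 • (1 + Xᵀ * (s • (T * X))) := by
      rw [smul_add, Matrix.mul_smul, smul_smul, hss, one_smul, ← Matrix.mul_assoc, hSdef,
        add_comm]
    rw [h1, Matrix.det_smul, Fintype.card_fin, Matrix.det_one_add_mul_comm,
      Matrix.smul_mul, Matrix.mul_assoc, ← Matrix.mul_assoc T X Xᵀ, ← hTQ, Matrix.det_mul]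
  have hT2 : T = Q⁻¹ + s • (T * X * Xᵀ * Q⁻¹) := by
    have h := congrArg (fun A => A * Q⁻¹) hTQ
    simp only [Matrix.add_mul, Matrix.one_mul, Matrix.smul_mul] at h
    rwa [Matrix.mul_assoc, hQQinv, Matrix.mul_one] at h
  set M : Matrix (Fin N) (Fin N) ℝ := s • 1 - (s*s) • (Xᵀ * Q⁻¹ * X) with hMdef
  have hSM : S * M = 1 := by
    have h3 : Xᵀ * T * X = Xᵀ * Q⁻¹ * X + s • (Xᵀ * (T * X * Xᵀ * Q⁻¹) * X) := by
      conv_lhs => rw [hT2]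
      rw [Matrix.mul_add, Matrix.add_mul, Matrix.mul_smul, Matrix.smul_mul]
    have h4 : s • (Xᵀ * (T * X)) = s • (Xᵀ * (Q⁻¹ * X)) +
        (s*s) • (Xᵀ * (T * (X * (Xᵀ * (Q⁻¹ * X))))) := by
      have h5 := congrArg (fun A => s • A) h3
      simpa only [smul_add, smul_smul, Matrix.mul_assoc] using h5
    have hc1 : s * σ ^ 2 = 1 := by rw [mul_comm]; exact hss
    have hc2 : s * s * σ ^ 2 = s := by rw [mul_assoc, hc1, mul_one]
    rw [hMdef, hSdef]
    simp only [Matrix.mul_sub, Matrix.add_mul, Matrix.mul_smul, Matrix.smul_mul,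
      Matrix.mul_one, Matrix.one_mul, smul_add, smul_smul, Matrix.mul_assoc]
    rw [hc1, hc2, h4]
    simp only [one_smul]
    abel
  have hSinv : S⁻¹ = M := Matrix.inv_eq_right_inv hSM
  obtain ⟨w, hwdef⟩ : ∃ w : Fin N → ℝ, w = y - Xᵀ *ᵥ μ := ⟨_, rfl⟩
  obtain ⟨bb, hbbdef⟩ : ∃ bb : Fin d → ℝ, bb = s • (X *ᵥ w) := ⟨_, rfl⟩
  obtain ⟨K, hKdef⟩ : ∃ K : ℝ, K = ((2 * Real.pi) ^ (-(N : ℝ) / 2) * ((σ^2)^N) ^ (-(1:ℝ)/2)) *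
    ((2 * Real.pi) ^ (-(d : ℝ) / 2) * T.det ^ (-(1:ℝ)/2)) *
    Real.exp (-(1/2) * (s * (w ⬝ᵥ w))) := ⟨_, rfl⟩
  have hcross : ∀ (u : Fin N → ℝ) (z : Fin d → ℝ), u ⬝ᵥ (Xᵀ *ᵥ z) = (X *ᵥ u) ⬝ᵥ z := by
    intro u z; rw [Matrix.dotProduct_mulVec, Matrix.vecMul_transpose]
  have hq : ∀ z : Fin d → ℝ, (Xᵀ *ᵥ z) ⬝ᵥ (Xᵀ *ᵥ z) = z ⬝ᵥ ((X * Xᵀ) *ᵥ z) := by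
    intro z
    rw [Matrix.dotProduct_mulVec, Matrix.vecMul_mulVec, Matrix.transpose_transpose,
      ← Matrix.dotProduct_mulVec]
  have hpoint : ∀ z : Fin d → ℝ,
      gaussianDensity (Xᵀ *ᵥ (z + μ)) (σ ^ 2 • 1) y * gaussianDensity μ T (z + μ)
        = K * Real.exp (-(1/2) * (z ⬝ᵥ (Q *ᵥ z)) + bb ⬝ᵥ z) := by
    intro z
    have hsub : y - Xᵀ *ᵥ (z + μ) = w - Xᵀ *ᵥ z := by
      rw [Matrix.mulVec_add, hwdef]; abel
    have hz : z + μ - μ = z := add_sub_cancel_right z μ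
    have hexp : (-(1/2) * ((w - Xᵀ *ᵥ z) ⬝ᵥ ((s • (1 : Matrix (Fin N) (Fin N) ℝ)) *ᵥ
          (w - Xᵀ *ᵥ z)))) + (-(1/2) * (z ⬝ᵥ (T⁻¹ *ᵥ z)))
        = (-(1/2) * (s * (w ⬝ᵥ w))) + (-(1/2) * (z ⬝ᵥ (Q *ᵥ z)) + bb ⬝ᵥ z) := by
      rw [Matrix.smul_mulVec, Matrix.one_mulVec, dotProduct_smul, smul_eq_mul,
        sub_dotProduct, dotProduct_sub, dotProduct_sub,
        dotProduct_comm (Xᵀ *ᵥ z) w, hcross w z, hq z, hQdef, Matrix.add_mulVec,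
        Matrix.smul_mulVec, dotProduct_add, dotProduct_smul, smul_eq_mul,
        hbbdef, smul_dotProduct, smul_eq_mul]
      ring
    simp only [gaussianDensity, hsub, hz, hsigmainv, hdetSigma, Fintype.card_fin]
    rw [hKdef]
    rw [show ((2 * Real.pi) ^ (-(N : ℝ) / 2) * ((σ^2)^N) ^ (-(1:ℝ)/2) *
        Real.exp (-(1/2) * ((w - Xᵀ *ᵥ z) ⬝ᵥ ((s • (1 : Matrix (Fin N) (Fin N) ℝ)) *ᵥ
          (w - Xᵀ *ᵥ z))))) *
        ((2 * Real.pi) ^ (-(d : ℝ) / 2) * T.det ^ (-(1:ℝ)/2) *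
        Real.exp (-(1/2) * (z ⬝ᵥ (T⁻¹ *ᵥ z))))
      = ((2 * Real.pi) ^ (-(N : ℝ) / 2) * ((σ^2)^N) ^ (-(1:ℝ)/2)) *
        ((2 * Real.pi) ^ (-(d : ℝ) / 2) * T.det ^ (-(1:ℝ)/2)) *
        Real.exp ((-(1/2) * ((w - Xᵀ *ᵥ z) ⬝ᵥ ((s • (1 : Matrix (Fin N) (Fin N) ℝ)) *ᵥ
          (w - Xᵀ *ᵥ z)))) + (-(1/2) * (z ⬝ᵥ (T⁻¹ *ᵥ z)))) from by
        rw [Real.exp_add]; ring]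
    rw [hexp, Real.exp_add]
    ring
  have hbbQ : bb ⬝ᵥ (Q⁻¹ *ᵥ bb) = s * (s * ((X *ᵥ w) ⬝ᵥ (Q⁻¹ *ᵥ (X *ᵥ w)))) := by
    rw [hbbdef, smul_dotProduct, Matrix.mulVec_smul, dotProduct_smul]
    simp [smul_eq_mul]
  have hwSw : w ⬝ᵥ (S⁻¹ *ᵥ w) = s * (w ⬝ᵥ w) - s * s * ((X *ᵥ w) ⬝ᵥ (Q⁻¹ *ᵥ (X *ᵥ w))) := by
    rw [hSinv, hMdef, Matrix.sub_mulVec, Matrix.smul_mulVec, Matrix.one_mulVec,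
      Matrix.smul_mulVec, dotProduct_sub, dotProduct_smul,
      dotProduct_smul, smul_eq_mul, smul_eq_mul,
      show (Xᵀ * Q⁻¹ * X) *ᵥ w = Xᵀ *ᵥ (Q⁻¹ *ᵥ (X *ᵥ w)) from by
        rw [← Matrix.mulVec_mulVec, ← Matrix.mulVec_mulVec],
      hcross w]
  have h2pi : (0:ℝ) < 2 * Real.pi := by positivity
  have hB : (2 * Real.pi) ^ (-(d:ℝ)/2) * (2 * Real.pi) ^ ((d:ℝ)/2) = 1 := by
    rw [← Real.rpow_add h2pi, neg_div, neg_add_cancel, Real.rpow_zero]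
  have hconst : ((2 * Real.pi) ^ (-(N : ℝ) / 2) * ((σ^2)^N) ^ (-(1:ℝ)/2)) *
      ((2 * Real.pi) ^ (-(d : ℝ) / 2) * T.det ^ (-(1:ℝ)/2)) *
      ((2 * Real.pi) ^ ((d:ℝ)/2) * Q.det ^ (-(1:ℝ)/2))
      = (2 * Real.pi) ^ (-(N : ℝ) / 2) * S.det ^ (-(1:ℝ)/2) := by
    have hA : S.det ^ (-(1:ℝ)/2)
        = ((σ^2)^N)^(-(1:ℝ)/2) * (T.det^(-(1:ℝ)/2) * Q.det^(-(1:ℝ)/2)) := by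
      rw [hdetS, Real.mul_rpow (by positivity) (by positivity),
        Real.mul_rpow hdetT.le hdetQ.le]
    rw [hA]
    calc ((2 * Real.pi) ^ (-(N : ℝ) / 2) * ((σ^2)^N) ^ (-(1:ℝ)/2)) *
        ((2 * Real.pi) ^ (-(d : ℝ) / 2) * T.det ^ (-(1:ℝ)/2)) *
        ((2 * Real.pi) ^ ((d:ℝ)/2) * Q.det ^ (-(1:ℝ)/2))
        = ((2 * Real.pi) ^ (-(N : ℝ) / 2) * (((σ^2)^N) ^ (-(1:ℝ)/2) *
          (T.det ^ (-(1:ℝ)/2) * Q.det ^ (-(1:ℝ)/2)))) *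
          ((2 * Real.pi) ^ (-(d:ℝ)/2) * (2 * Real.pi) ^ ((d:ℝ)/2)) := by ring
      _ = _ := by rw [hB, mul_one]
  calc (∫ θ : Fin d → ℝ, gaussianDensity (Xᵀ *ᵥ θ) (σ ^ 2 • 1) y * gaussianDensity μ T θ)
      = ∫ z : Fin d → ℝ,
          gaussianDensity (Xᵀ *ᵥ (z + μ)) (σ ^ 2 • 1) y * gaussianDensity μ T (z + μ) :=
        (integral_add_right_eq_self
          (fun θ => gaussianDensity (Xᵀ *ᵥ θ) (σ ^ 2 • 1) y * gaussianDensity μ T θ) μ).symm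
    _ = ∫ z : Fin d → ℝ, K * Real.exp (-(1/2) * (z ⬝ᵥ (Q *ᵥ z)) + bb ⬝ᵥ z) := by
        exact congrArg _ (funext hpoint)
    _ = K * ∫ z : Fin d → ℝ, Real.exp (-(1/2) * (z ⬝ᵥ (Q *ᵥ z)) + bb ⬝ᵥ z) :=
        integral_const_mul K _
    _ = K * ((2 * Real.pi) ^ ((d:ℝ)/2) * Q.det ^ (-(1:ℝ)/2) *
          Real.exp ((1/2) * (bb ⬝ᵥ (Q⁻¹ *ᵥ bb)))) := by
        rw [integral_rexp_neg_half_quad hQpd bb]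
    _ = gaussianDensity (Xᵀ *ᵥ μ) S y := by
        simp only [gaussianDensity, Fintype.card_fin, ← hwdef]
        rw [hKdef]
        rw [show (((2 * Real.pi) ^ (-(N : ℝ) / 2) * ((σ^2)^N) ^ (-(1:ℝ)/2)) *
            ((2 * Real.pi) ^ (-(d : ℝ) / 2) * T.det ^ (-(1:ℝ)/2)) *
            Real.exp (-(1/2) * (s * (w ⬝ᵥ w)))) *
            ((2 * Real.pi) ^ ((d:ℝ)/2) * Q.det ^ (-(1:ℝ)/2) *
            Real.exp ((1/2) * (bb ⬝ᵥ (Q⁻¹ *ᵥ bb))))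
          = (((2 * Real.pi) ^ (-(N : ℝ) / 2) * ((σ^2)^N) ^ (-(1:ℝ)/2)) *
            ((2 * Real.pi) ^ (-(d : ℝ) / 2) * T.det ^ (-(1:ℝ)/2)) *
            ((2 * Real.pi) ^ ((d:ℝ)/2) * Q.det ^ (-(1:ℝ)/2))) *
            Real.exp ((-(1/2) * (s * (w ⬝ᵥ w))) + (1/2) * (bb ⬝ᵥ (Q⁻¹ *ᵥ bb))) from by
            rw [Real.exp_add]; ring]
        rw [hconst]
        congr 1
        rw [hbbQ, hwSw]
        ring
end
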